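/- Fix p ≥ 1 and let g = sp(2p,ℂ) = {X ∈ M_{2p}(ℂ) : Xᵀ J + J X = 0}, where J = (0 I_p; -I_p 0). Define k' = {(X 0; 0 -Xᵀ) : X ∈ M_p(ℂ)}, p⁺ = {(0 Y; 0 0) : Y = Yᵀ}, p⁻ = {(0 0; Z 0) : Z = Zᵀ}, and the Lie subalgebras q⁺ = k' ⊕ p⁺ and q⁻ = k' ⊕ p⁻. Let E be a finite-dimensional q⁺-module on which p⁺ acts by zero and F a finite-dimensional q⁻-module on which p⁻ acts by zero; set V_E = U(g) ⊗_{U(q⁺)} E and V_F = U(g) ⊗_{U(q⁻)} F, and give V_E ⊗_ℂ V_F the diagonal g-action. For each N ≥ 0 let W_N be the ℂ-linear span in V_E ⊗ V_F of the elements ((α_1⋯α_r)·(1 ⊗ e')) ⊗ ((β_1⋯β_s)·(1 ⊗ f')) with r + s ≤ N, α_i ∈ p⁻, β_j ∈ p⁺, e' ∈ E, f' ∈ F. Then for all α_1, …, α_k ∈ p⁻, β_1, …, β_l ∈ p⁺, e ∈ E and f ∈ F, the diagonal action of the product α_1⋯α_k β_1⋯β_l ∈ U(g) satisfies (α_1⋯α_k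 β_1⋯β_l) · ((1 ⊗ e) ⊗ (1 ⊗ f)) = ((α_1⋯α_k)·(1 ⊗ e)) ⊗ ((β_1⋯β_l)·(1 ⊗ f)) + v for some v ∈ W_{k+l-1}. -/

import Mathlib

open Matrix TensorProduct

attribute [local instance 100] LieRing.ofAssociativeRing

/-- `2p × 2p` complex matrices in `p × p` block form. -/
abbrev gl2 (p : ℕ) := Matrix (Fin p ⊕ Fin p) (Fin p ⊕ Fin p) ℂ

/-- **Filtration lemma for the tensor product of two induced modules.**
Let `g = sp(2p,ℂ)`, `q⁺ = k' ⊕ p⁺` and `q⁻ = k' ⊕ p⁻`.  Let `E` be a finite-dimensional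
`q⁺`-module on which `p⁺` acts by zero and `F` a finite-dimensional `q⁻`-module on which
`p⁻` acts by zero, and let `VE = U(g) ⊗_{U(q⁺)} E`, `VF = U(g) ⊗_{U(q⁻)} F` (characterized
by their universal properties, with unit maps `ιE`, `ιF`).  Give `VE ⊗ VF` the diagonal
`g`-action and let `W_N` be the span of the `((α_1⋯α_r)·(1 ⊗ e')) ⊗ ((β_1⋯β_s)·(1 ⊗ f'))`
with `r + s ≤ N`, `α_i ∈ p⁻`, `β_j ∈ p⁺`.  Then for `α_1, …, α_k ∈ p⁻`, `β_1, …, β_l ∈ p⁺`,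
`e ∈ E`, `f ∈ F`, the diagonal action of the product `α_1⋯α_k β_1⋯β_l ∈ U(g)` satisfies
`(α_1⋯α_kβ_1⋯β_l)·((1 ⊗ e) ⊗ (1 ⊗ f)) = ((α_1⋯α_k)·(1 ⊗ e)) ⊗ ((β_1⋯β_l)·(1 ⊗ f)) + v`
with `v ∈ W_{k+l-1}`. -/
theorem stmt15 (p : ℕ) (hp : 1 ≤ p)
    (g qPlus qMinus : LieSubalgebra ℂ (gl2 p))
    (hg : ∀ M : gl2 p, M ∈ g ↔
      Mᵀ * fromBlocks 0 1 (-1) 0 + fromBlocks 0 1 (-1) 0 * M = 0)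
    (hqPlus : ∀ M : gl2 p, M ∈ qPlus ↔
      ∃ X Y : Matrix (Fin p) (Fin p) ℂ, Yᵀ = Y ∧ M = fromBlocks X Y 0 (-Xᵀ))
    (hqMinus : ∀ M : gl2 p, M ∈ qMinus ↔
      ∃ X Z : Matrix (Fin p) (Fin p) ℂ, Zᵀ = Z ∧ M = fromBlocks X 0 Z (-Xᵀ))
    (E : Type) [AddCommGroup E] [Module ℂ E] [LieRingModule qPlus E] [LieModule ℂ qPlus E]
    [FiniteDimensional ℂ E]
    (hE : ∀ x : qPlus,
      (∃ Y : Matrix (Fin p) (Fin p) ℂ, Yᵀ = Y ∧ (x : gl2 p) = fromBlocks 0 Y 0 0) →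
      ∀ e : E, ⁅x, e⁆ = 0)
    (F : Type) [AddCommGroup F] [Module ℂ F] [LieRingModule qMinus F] [LieModule ℂ qMinus F]
    [FiniteDimensional ℂ F]
    (hF : ∀ x : qMinus,
      (∃ Z : Matrix (Fin p) (Fin p) ℂ, Zᵀ = Z ∧ (x : gl2 p) = fromBlocks 0 0 Z 0) →
      ∀ f : F, ⁅x, f⁆ = 0)
    (VE : Type) [AddCommGroup VE] [Module ℂ VE] [LieRingModule g VE] [LieModule ℂ g VE]
    (ιE : E →ₗ[ℂ] VE)
    (hιE : ∀ (x : qPlus) (hx : (x : gl2 p) ∈ g) (e : E),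
      ιE ⁅x, e⁆ = ⁅(⟨(x : gl2 p), hx⟩ : g), ιE e⁆)
    (hVEuniv : ∀ (M : Type) [AddCommGroup M] [Module ℂ M] [LieRingModule g M]
      [LieModule ℂ g M] (φ : E →ₗ[ℂ] M),
      (∀ (x : qPlus) (hx : (x : gl2 p) ∈ g) (e : E),
        φ ⁅x, e⁆ = ⁅(⟨(x : gl2 p), hx⟩ : g), φ e⁆) →
      ∃! Φ : VE →ₗ[ℂ] M,
        (∀ (x : g) (v : VE), Φ ⁅x, v⁆ = ⁅x, Φ v⁆) ∧ ∀ e : E, Φ (ιE e) = φ e)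
    (VF : Type) [AddCommGroup VF] [Module ℂ VF] [LieRingModule g VF] [LieModule ℂ g VF]
    (ιF : F →ₗ[ℂ] VF)
    (hιF : ∀ (x : qMinus) (hx : (x : gl2 p) ∈ g) (f : F),
      ιF ⁅x, f⁆ = ⁅(⟨(x : gl2 p), hx⟩ : g), ιF f⁆)
    (hVFuniv : ∀ (M : Type) [AddCommGroup M] [Module ℂ M] [LieRingModule g M]
      [LieModule ℂ g M] (φ : F →ₗ[ℂ] M),
      (∀ (x : qMinus) (hx : (x : gl2 p) ∈ g) (f : F),
        φ ⁅x, f⁆ = ⁅(⟨(x : gl2 p), hx⟩ : g), φ f⁆) →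
      ∃! Φ : VF →ₗ[ℂ] M,
        (∀ (x : g) (v : VF), Φ ⁅x, v⁆ = ⁅x, Φ v⁆) ∧ ∀ f : F, Φ (ιF f) = φ f)
    -- the filtration `W_N` of `VE ⊗ VF`
    (Wfil : ℕ → Submodule ℂ (VE ⊗[ℂ] VF))
    (hWfil : ∀ N : ℕ, Wfil N = Submodule.span ℂ
      {u : VE ⊗[ℂ] VF | ∃ la lb : List g,
        la.length + lb.length ≤ N ∧
        (∀ w ∈ la, ∃ Z : Matrix (Fin p) (Fin p) ℂ, Zᵀ = Z ∧
          ((w : gl2 p) = fromBlocks 0 0 Z 0)) ∧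
        (∀ w ∈ lb, ∃ Y : Matrix (Fin p) (Fin p) ℂ, Yᵀ = Y ∧
          ((w : gl2 p) = fromBlocks 0 Y 0 0)) ∧
        ∃ (e' : E) (f' : F),
          u = (la.foldr (fun w v => ⁅w, v⁆) (ιE e')) ⊗ₜ[ℂ]
              (lb.foldr (fun w v => ⁅w, v⁆) (ιF f'))})
    (k l : ℕ) (α : Fin k → g) (β : Fin l → g)
    -- `α_i ∈ p⁻`, `β_j ∈ p⁺`
    (hα : ∀ i, ∃ Z : Matrix (Fin p) (Fin p) ℂ, Zᵀ = Z ∧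
      ((α i : gl2 p) = fromBlocks 0 0 Z 0))
    (hβ : ∀ j, ∃ Y : Matrix (Fin p) (Fin p) ℂ, Yᵀ = Y ∧
      ((β j : gl2 p) = fromBlocks 0 Y 0 0))
    (e : E) (f : F) :
    ∃ v ∈ Wfil (k + l - 1),
      (List.ofFn α ++ List.ofFn β).foldr (fun w u => ⁅w, u⁆) ((ιE e) ⊗ₜ[ℂ] (ιF f))
        = ((List.ofFn α).foldr (fun w v => ⁅w, v⁆) (ιE e)) ⊗ₜ[ℂ]
            ((List.ofFn β).foldr (fun w v => ⁅w, v⁆) (ιF f)) + v := by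
  classical
  -- notation for the three predicates on elements of `g`
  let isP : g → Prop := fun w => ∃ Y : Matrix (Fin p) (Fin p) ℂ, Yᵀ = Y ∧
      ((w : gl2 p) = fromBlocks 0 Y 0 0)
  let isM : g → Prop := fun w => ∃ Z : Matrix (Fin p) (Fin p) ℂ, Zᵀ = Z ∧
      ((w : gl2 p) = fromBlocks 0 0 Z 0)
  let isK : g → Prop := fun w => ∃ X : Matrix (Fin p) (Fin p) ℂ,
      ((w : gl2 p) = fromBlocks X 0 0 (-Xᵀ))
  -- generator sets for the F side and for W
  let GF : ℕ → Set VF := fun s => {u : VF | ∃ lb : List g, lb.length + 1 ≤ s ∧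
      (∀ w ∈ lb, isP w) ∧ ∃ f' : F, u = lb.foldr (fun w v => ⁅w, v⁆) (ιF f')}
  let GW : ℕ → Set (VE ⊗[ℂ] VF) := fun n => {u | ∃ la lb : List g,
      la.length + lb.length + 1 ≤ n ∧ (∀ w ∈ la, isM w) ∧ (∀ w ∈ lb, isP w) ∧
      ∃ (e' : E) (f' : F),
        u = (la.foldr (fun w v => ⁅w, v⁆) (ιE e')) ⊗ₜ[ℂ]
            (lb.foldr (fun w v => ⁅w, v⁆) (ιF f'))}
  -- zero action of p⁺ on ιE
  have hbE : ∀ w : g, isP w → ∀ e : E, ⁅w, ιE e⁆ = 0 := by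
    intro w hw e
    have hx : (w : gl2 p) ∈ qPlus := by
      obtain ⟨Y, hY, hw'⟩ := hw
      rw [hqPlus]; exact ⟨0, Y, hY, by simp [hw']⟩
    have h1 := hιE ⟨(w : gl2 p), hx⟩ w.2 e
    rw [hE ⟨(w : gl2 p), hx⟩ hw e] at h1
    have h2 : (⟨((⟨(w : gl2 p), hx⟩ : qPlus) : gl2 p), w.2⟩ : g) = w := rfl
    rw [h2] at h1
    simpa using h1.symm
  -- zero action of p⁻ on ιF
  have hbF : ∀ w : g, isM w → ∀ f : F, ⁅w, ιF f⁆ = 0 := by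
    intro w hw f
    have hx : (w : gl2 p) ∈ qMinus := by
      obtain ⟨Z, hZ, hw'⟩ := hw
      rw [hqMinus]; exact ⟨0, Z, hZ, by simp [hw']⟩
    have h1 := hιF ⟨(w : gl2 p), hx⟩ w.2 f
    rw [hF ⟨(w : gl2 p), hx⟩ hw f] at h1
    have h2 : (⟨((⟨(w : gl2 p), hx⟩ : qMinus) : gl2 p), w.2⟩ : g) = w := rfl
    rw [h2] at h1
    simpa using h1.symm
  -- k' action on ιF lands in the image of ιF
  have hcF : ∀ w : g, isK w → ∀ f : F, ∃ f' : F, ⁅w, ιF f⁆ = ιF f' := by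
    intro w hw f
    have hx : (w : gl2 p) ∈ qMinus := by
      obtain ⟨X, hw'⟩ := hw
      rw [hqMinus]; exact ⟨X, 0, by simp, by simp [hw']⟩
    refine ⟨⁅(⟨(w : gl2 p), hx⟩ : qMinus), f⁆, ?_⟩
    have h1 := hιF ⟨(w : gl2 p), hx⟩ w.2 f
    have h2 : (⟨((⟨(w : gl2 p), hx⟩ : qMinus) : gl2 p), w.2⟩ : g) = w := rfl
    rw [h2] at h1
    exact h1.symm
  -- bracket computations
  have hbrMP : ∀ a b : g, isM a → isP b → isK ⁅a, b⁆ := by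
    rintro a b ⟨Z, hZ, ha⟩ ⟨Y, hY, hb⟩
    refine ⟨-(Y*Z), ?_⟩
    rw [LieSubalgebra.coe_bracket, Ring.lie_def, ha, hb]
    simp [Matrix.fromBlocks_multiply, Matrix.transpose_mul, hY, hZ, sub_eq_add_neg,
      Matrix.fromBlocks_add, Matrix.fromBlocks_neg]
  have hbrKP : ∀ c b : g, isK c → isP b → isP ⁅c, b⁆ := by
    rintro c b ⟨X, hc⟩ ⟨Y, hY, hb⟩
    refine ⟨X*Y + Y*Xᵀ, by simp [Matrix.transpose_add, Matrix.transpose_mul, hY, add_comm], ?_⟩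
    rw [LieSubalgebra.coe_bracket, Ring.lie_def, hc, hb]
    simp [Matrix.fromBlocks_multiply, sub_eq_add_neg, Matrix.fromBlocks_add,
      Matrix.fromBlocks_neg]
  -- pushing a lie bracket through a span (for VF)
  have lieSpanF : ∀ (b : g) (S T : Set VF), (∀ u ∈ S, ⁅b, u⁆ ∈ Submodule.span ℂ T) →
      ∀ x ∈ Submodule.span ℂ S, ⁅b, x⁆ ∈ Submodule.span ℂ T := by
    intro b S T hST x hx
    induction hx using Submodule.span_induction with
    | mem u hu => exact hST u hu
    | zero => simp
    | add u v _ _ hu hv => rw [lie_add]; exact add_mem hu hv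
    | smul a u _ hu => rw [lie_smul]; exact Submodule.smul_mem _ _ hu
  have lieSpanW : ∀ (b : g) (S T : Set (VE ⊗[ℂ] VF)),
      (∀ u ∈ S, ⁅b, u⁆ ∈ Submodule.span ℂ T) →
      ∀ x ∈ Submodule.span ℂ S, ⁅b, x⁆ ∈ Submodule.span ℂ T := by
    intro b S T hST x hx
    induction hx using Submodule.span_induction with
    | mem u hu => exact hST u hu
    | zero => simp
    | add u v _ _ hu hv => rw [lie_add]; exact add_mem hu hv
    | smul a u _ hu => rw [lie_smul]; exact Submodule.smul_mem _ _ hu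
  -- pushing `A ⊗ₜ ·` through a span
  have tmulSpan : ∀ (A : VE) (S : Set VF) (T : Set (VE ⊗[ℂ] VF)),
      (∀ u ∈ S, A ⊗ₜ[ℂ] u ∈ Submodule.span ℂ T) →
      ∀ x ∈ Submodule.span ℂ S, A ⊗ₜ[ℂ] x ∈ Submodule.span ℂ T := by
    intro A S T hST x hx
    induction hx using Submodule.span_induction with
    | mem u hu => exact hST u hu
    | zero => rw [tmul_zero]; simp
    | add u v _ _ hu hv => rw [tmul_add]; exact add_mem hu hv
    | smul a u _ hu => rw [tmul_smul]; exact Submodule.smul_mem _ _ hu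
  -- Lemma D : k' elements lower nothing
  have lemD : ∀ (c : g), isK c → ∀ (lb : List g), (∀ w ∈ lb, isP w) → ∀ f : F,
      ⁅c, lb.foldr (fun w v => ⁅w, v⁆) (ιF f)⁆ ∈ Submodule.span ℂ (GF (lb.length + 1)) := by
    intro c hc lb
    induction lb with
    | nil =>
      intro _ f
      obtain ⟨f', hf'⟩ := hcF c hc f
      rw [List.foldr_nil, hf']
      exact Submodule.subset_span ⟨[], by simp, by simp, f', by simp⟩
    | cons b lb ih =>
      intro hmem f
      have hb : isP b := hmem b (by simp)
      have hmem' : ∀ w ∈ lb, isP w := fun w hw => hmem w (List.mem_cons_of_mem _ hw)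
      rw [List.foldr_cons, leibniz_lie]
      apply add_mem
      · exact Submodule.subset_span ⟨⁅c, b⁆ :: lb, by simp,
          by rintro w hw; rcases List.mem_cons.1 hw with h | h
             · exact h ▸ hbrKP c b hc hb
             · exact hmem' w h, f, by simp⟩
      · refine lieSpanF b (GF (lb.length + 1)) _ ?_ _ (ih hmem' f)
        rintro u ⟨lb', hlen, hP, f', rfl⟩
        exact Submodule.subset_span ⟨b :: lb', by simpa using hlen,
          by rintro w hw; rcases List.mem_cons.1 hw with h | h
             · exact h ▸ hb
             · exact hP w h, f', by simp⟩
  -- Lemma C : p⁻ elements lower the p⁺ length by one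
  have lemC : ∀ (a : g), isM a → ∀ (lb : List g), (∀ w ∈ lb, isP w) → ∀ f : F,
      ⁅a, lb.foldr (fun w v => ⁅w, v⁆) (ιF f)⁆ ∈ Submodule.span ℂ (GF lb.length) := by
    intro a ha lb
    induction lb with
    | nil =>
      intro _ f
      rw [List.foldr_nil, hbF a ha f]
      exact Submodule.zero_mem _
    | cons b lb ih =>
      intro hmem f
      have hb : isP b := hmem b (by simp)
      have hmem' : ∀ w ∈ lb, isP w := fun w hw => hmem w (List.mem_cons_of_mem _ hw)
      rw [List.foldr_cons, leibniz_lie]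
      apply add_mem
      · -- ⁅⁅a,b⁆, T⁆ with ⁅a,b⁆ ∈ k'
        have := lemD ⁅a, b⁆ (hbrMP a b ha hb) lb hmem' f
        refine Submodule.span_mono ?_ this
        rintro u ⟨lb', hlen, hP, f', rfl⟩
        exact ⟨lb', by simpa using hlen, hP, f', rfl⟩
      · refine lieSpanF b (GF lb.length) _ ?_ _ (ih hmem' f)
        rintro u ⟨lb', hlen, hP, f', rfl⟩
        refine Submodule.subset_span ⟨b :: lb', by simp; omega,
          by rintro w hw; rcases List.mem_cons.1 hw with h | h
             · exact h ▸ hb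
             · exact hP w h, f', by simp⟩
  -- W-stability : p⁻ raises the W filtration degree by at most one
  have lemW : ∀ (a : g), isM a → ∀ (n : ℕ), ∀ u ∈ GW n,
      ⁅a, u⁆ ∈ Submodule.span ℂ (GW (n + 1)) := by
    rintro a ha n u ⟨la, lb, hlen, hM, hP, e', f', rfl⟩
    rw [TensorProduct.LieModule.lie_tmul_right]
    apply add_mem
    · refine Submodule.subset_span ⟨a :: la, lb, by simp; omega,
        ?_, hP, e', f', by simp⟩
      rintro w hw; rcases List.mem_cons.1 hw with h | h
      · exact h ▸ ha
      · exact hM w h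
    · refine tmulSpan _ (GF lb.length) _ ?_ _ (lemC a ha lb hP f')
      rintro u ⟨lb', hlen', hP', f'', rfl⟩
      exact Submodule.subset_span ⟨la, lb', by omega, hM, hP', e', f'', rfl⟩
  -- Lemma A : the p⁺ part passes entirely to the right factor
  have lemA : ∀ (lb : List g), (∀ w ∈ lb, isP w) → ∀ (e : E) (f : F),
      lb.foldr (fun w u => ⁅w, u⁆) ((ιE e) ⊗ₜ[ℂ] (ιF f))
        = (ιE e) ⊗ₜ[ℂ] (lb.foldr (fun w v => ⁅w, v⁆) (ιF f)) := by
    intro lb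
    induction lb with
    | nil => intro _ e f; simp
    | cons b lb ih =>
      intro hmem e f
      have hb : isP b := hmem b (by simp)
      have hmem' : ∀ w ∈ lb, isP w := fun w hw => hmem w (List.mem_cons_of_mem _ hw)
      rw [List.foldr_cons, ih hmem' e f, List.foldr_cons,
        TensorProduct.LieModule.lie_tmul_right, hbE b hb e, TensorProduct.zero_tmul, zero_add]
  -- Lemma B : the main induction on the p⁻ part
  have lemB : ∀ (la : List g), (∀ w ∈ la, isM w) → ∀ (lb : List g), (∀ w ∈ lb, isP w) →
      ∀ (e : E) (f : F),
      ∃ v ∈ Submodule.span ℂ (GW (la.length + lb.length)),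
        la.foldr (fun w u => ⁅w, u⁆) ((ιE e) ⊗ₜ[ℂ] (lb.foldr (fun w v => ⁅w, v⁆) (ιF f)))
          = (la.foldr (fun w v => ⁅w, v⁆) (ιE e)) ⊗ₜ[ℂ]
              (lb.foldr (fun w v => ⁅w, v⁆) (ιF f)) + v := by
    intro la
    induction la with
    | nil =>
      intro _ lb hP e f
      exact ⟨0, Submodule.zero_mem _, by simp⟩
    | cons a la ih =>
      intro hmem lb hP e f
      have ha : isM a := hmem a (by simp)
      have hmem' : ∀ w ∈ la, isM w := fun w hw => hmem w (List.mem_cons_of_mem _ hw)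
      obtain ⟨v', hv', heq⟩ := ih hmem' lb hP e f
      refine ⟨(la.foldr (fun w v => ⁅w, v⁆) (ιE e)) ⊗ₜ[ℂ]
          ⁅a, lb.foldr (fun w v => ⁅w, v⁆) (ιF f)⁆ + ⁅a, v'⁆, ?_, ?_⟩
      · apply add_mem
        · refine tmulSpan _ (GF lb.length) _ ?_ _ (lemC a ha lb hP f)
          rintro u ⟨lb', hlen', hP', f'', rfl⟩
          exact Submodule.subset_span ⟨la, lb', by simp; omega, hmem', hP', e, f'', rfl⟩
        · refine lieSpanW a (GW (la.length + lb.length)) _ ?_ _ hv'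
          intro u hu
          refine Submodule.span_mono ?_ (lemW a ha _ u hu)
          rintro x ⟨la', lb', h1, h2, h3, e', f', rfl⟩
          exact ⟨la', lb', by simp; omega, h2, h3, e', f', rfl⟩
      · rw [List.foldr_cons, heq, lie_add, TensorProduct.LieModule.lie_tmul_right, List.foldr_cons]
        abel
  -- conclude
  have hPβ : ∀ w ∈ List.ofFn β, isP w := by
    intro w hw
    obtain ⟨j, rfl⟩ := List.mem_ofFn.1 hw
    exact hβ j
  have hMα : ∀ w ∈ List.ofFn α, isM w := by
    intro w hw
    obtain ⟨i, rfl⟩ := List.mem_ofFn.1 hw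
    exact hα i
  obtain ⟨v, hv, heq⟩ := lemB (List.ofFn α) hMα (List.ofFn β) hPβ e f
  refine ⟨v, ?_, ?_⟩
  · rw [hWfil]
    refine Submodule.span_mono ?_ hv
    rintro x ⟨la, lb, h1, h2, h3, e', f', rfl⟩
    refine ⟨la, lb, ?_, h2, h3, e', f', rfl⟩
    simp only [List.length_ofFn] at h1
    omega
  · rw [List.foldr_append, lemA (List.ofFn β) hPβ e f, heq]
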